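/- Let σ be an interior payoff monotone strategy profile for a finite normal-form game Γ. Then there exists a profile f=(f_i)_{i∈N} of control cost functions such that for each player i and each pair of actions a_l, a_k ∈ A_i, U_i(σ_{-i},a_l) − U_i(σ_{-i},a_k) = f_i'(σ_i(a_l)) − f_i'(σ_i(a_k)); by van Damme's characterization these first-order conditions mean σ is a Nash equilibrium of the control cost game associated with Γ and f. -/

import Mathlib

open Filter Topology

section GameDefs

variable {N : Type} [Fintype N] [DecidableEq N] {A : N → Type}
  [∀ i, Fintype (A i)] [∀ i, DecidableEq (A i)]

/-- A mixed-strategy profile: each `σ i` is a probability distribution on `A i`. -/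
def IsStrategy (σ : ∀ i, A i → ℝ) : Prop :=
  (∀ i a, 0 ≤ σ i a) ∧ ∀ i, ∑ a, σ i a = 1

/-- An interior profile places positive probability on every action. -/
def Interior (σ : ∀ i, A i → ℝ) : Prop :=
  ∀ i a, 0 < σ i a

/-- Expected utility of player `i` at profile `σ`. -/
noncomputable def expUtil (u : ∀ i : N, (∀ j, A j) → ℝ) (σ : ∀ i, A i → ℝ) (i : N) : ℝ :=
  ∑ a : ∀ j, A j, u i a * ∏ j, σ j (a j)

/-- Expected utility of player `i` from playing action `ai` against `σ₋ᵢ`. -/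
noncomputable def devUtil (u : ∀ i : N, (∀ j, A j) → ℝ) (σ : ∀ i, A i → ℝ)
    (i : N) (ai : A i) : ℝ :=
  expUtil u (Function.update σ i (fun b => if b = ai then (1 : ℝ) else 0)) i

/-- Nash equilibrium. -/
def IsNash (u : ∀ i : N, (∀ j, A j) → ℝ) (σ : ∀ i, A i → ℝ) : Prop :=
  IsStrategy σ ∧ ∀ (i : N) (μ : A i → ℝ), (∀ a, 0 ≤ μ a) → (∑ a, μ a = 1) →
    expUtil u (Function.update σ i μ) i ≤ expUtil u σ i

/-- Weak payoff monotonicity: differences in behavior reveal differences in payoffs. -/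
def WeaklyPayoffMonotone (u : ∀ i : N, (∀ j, A j) → ℝ) (σ : ∀ i, A i → ℝ) : Prop :=
  IsStrategy σ ∧ ∀ (i : N) (ai bi : A i), σ i bi < σ i ai →
    devUtil u σ i bi < devUtil u σ i ai

/-- Payoff monotonicity. -/
def PayoffMonotone (u : ∀ i : N, (∀ j, A j) → ℝ) (σ : ∀ i, A i → ℝ) : Prop :=
  IsStrategy σ ∧ ∀ (i : N) (ai bi : A i),
    σ i bi ≤ σ i ai ↔ devUtil u σ i bi ≤ devUtil u σ i ai

/-- Pointwise convergence of a sequence of profiles. -/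
def ConvergesTo (s : ℕ → ∀ i, A i → ℝ) (σ : ∀ i, A i → ℝ) : Prop :=
  ∀ (i : N) (ai : A i), Tendsto (fun n => s n i ai) atTop (𝓝 (σ i ai))

/-- Empirical equilibrium: a Nash equilibrium that is the limit of weakly payoff
monotone profiles. -/
def IsEmpirical (u : ∀ i : N, (∀ j, A j) → ℝ) (σ : ∀ i, A i → ℝ) : Prop :=
  IsNash u σ ∧ ∃ s : ℕ → ∀ i, A i → ℝ,
    (∀ n, WeaklyPayoffMonotone u (s n)) ∧ ConvergesTo s σ

/-- Proper equilibrium (Myerson). -/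
def IsProper (u : ∀ i : N, (∀ j, A j) → ℝ) (σ : ∀ i, A i → ℝ) : Prop :=
  IsStrategy σ ∧ ∃ s : ℕ → ∀ i, A i → ℝ,
    (∀ n, IsStrategy (s n) ∧ Interior (s n) ∧
      ∀ (i : N) (ai bi : A i),
        devUtil u (s n) i bi < devUtil u (s n) i ai →
          s n i bi ≤ (1 / (n + 1) : ℝ) * s n i ai) ∧
    ConvergesTo s σ

/-- Perfect equilibrium (Selten, in Myerson's formulation). -/
def IsPerfect (u : ∀ i : N, (∀ j, A j) → ℝ) (σ : ∀ i, A i → ℝ) : Prop :=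
  IsStrategy σ ∧ ∃ s : ℕ → ∀ i, A i → ℝ,
    (∀ n, IsStrategy (s n) ∧ Interior (s n) ∧
      ∀ (i : N) (ai : A i), (1 / (n + 1) : ℝ) < s n i ai →
        ∀ bi : A i, devUtil u (s n) i bi ≤ devUtil u (s n) i ai) ∧
    ConvergesTo s σ

/-- `bi` weakly dominates `ai` for player `i`. -/
def WeaklyDominates (u : ∀ i : N, (∀ j, A j) → ℝ) (i : N) (bi ai : A i) : Prop :=
  (∀ a : ∀ j, A j, u i (Function.update a i ai) ≤ u i (Function.update a i bi)) ∧
  ∃ a : ∀ j, A j, u i (Function.update a i ai) < u i (Function.update a i bi)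

/-- Undominated Nash equilibrium. -/
def IsUndominatedNash (u : ∀ i : N, (∀ j, A j) → ℝ) (σ : ∀ i, A i → ℝ) : Prop :=
  IsNash u σ ∧ ∀ (i : N) (ai : A i), 0 < σ i ai →
    ¬ ∃ bi : A i, WeaklyDominates u i bi ai

end GameDefs

/-- A regular quantal response function on a finite set of actions `B`:
interiority, continuity, responsiveness, and monotonicity. -/
def IsRegularQRF {B : Type} [Fintype B] [DecidableEq B]
    (p : (B → ℝ) → (B → ℝ)) : Prop :=
  (∀ x, (∀ a, 0 < p x a) ∧ ∑ a, p x a = 1) ∧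
  Continuous p ∧
  (∀ (x : B → ℝ) (η : ℝ) (a : B), 0 < η →
    p x a < p (Function.update x a (x a + η)) a) ∧
  ∀ (x : B → ℝ) (a b : B), x b < x a → p x b < p x a

section QREDefs

variable {N : Type} [Fintype N] [DecidableEq N] {A : N → Type}
  [∀ i, Fintype (A i)] [∀ i, DecidableEq (A i)]

/-- Quantal response equilibrium with respect to a profile of QRFs `p`. -/
def IsQRE (u : ∀ i : N, (∀ j, A j) → ℝ) (p : ∀ i, (A i → ℝ) → (A i → ℝ))
    (σ : ∀ i, A i → ℝ) : Prop :=
  ∀ i : N, σ i = p i (fun ai => devUtil u σ i ai)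

/-- A sequence of profiles of QRFs is utility maximizing in the limit. -/
def UtilityMaximizingInLimit (u : ∀ i : N, (∀ j, A j) → ℝ)
    (p : ℕ → ∀ i, (A i → ℝ) → (A i → ℝ)) : Prop :=
  ∀ (s : ℕ → ∀ i, A i → ℝ) (σ : ∀ i, A i → ℝ),
    (∀ n, IsQRE u (p n) (s n)) → ConvergesTo s σ → IsNash u σ

/-- `σ` is approachable by regular QRE that are utility maximizing in the limit. -/
def ApproachableByRegularQRE (u : ∀ i : N, (∀ j, A j) → ℝ) (σ : ∀ i, A i → ℝ) : Prop :=
  ∃ p : ℕ → ∀ i, (A i → ℝ) → (A i → ℝ),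
    (∀ n i, IsRegularQRF (p n i)) ∧ UtilityMaximizingInLimit u p ∧
    ∃ s : ℕ → ∀ i, A i → ℝ, (∀ n, IsQRE u (p n) (s n)) ∧ ConvergesTo s σ

end QREDefs

/-- A control cost function (van Damme), bundled with its derivative on `(0,1]`. -/
structure ControlCost where
  f : ℝ → ℝ
  f' : ℝ → ℝ
  hasDeriv : ∀ x ∈ Set.Ioc (0:ℝ) 1, HasDerivWithinAt f (f' x) (Set.Ioc (0:ℝ) 1) x
  contDeriv : ContinuousOn f' (Set.Ioc (0:ℝ) 1)
  anti : StrictAntiOn f (Set.Ioc (0:ℝ) 1)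
  convex : StrictConvexOn ℝ (Set.Ioc (0:ℝ) 1) f
  atOne : f 1 = 0
  blowup : Tendsto f (nhdsWithin 0 (Set.Ioi (0:ℝ))) atTop


/-- Strictly monotone continuous interpolation through finite data. -/
lemma exists_strictMono_interp (S : Finset ℝ) (y : ℝ → ℝ)
    (hy : ∀ v ∈ S, ∀ w ∈ S, v < w → y v < y w) :
    ∃ H : ℝ → ℝ, Continuous H ∧ StrictMono H ∧ ∀ v ∈ S, H v = y v := by
  induction S using Finset.induction_on_max with
  | empty => exact ⟨id, continuous_id, strictMono_id, by simp⟩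
  | insert a s ha IH =>
    obtain ⟨H, hc, hm, hval⟩ := IH (fun v hv w hw =>
      hy v (Finset.mem_insert_of_mem hv) w (Finset.mem_insert_of_mem hw))
    rcases s.eq_empty_or_nonempty with rfl | hs
    · refine ⟨fun x => x - a + y a, by continuity, fun x z h => by dsimp; linarith, by simp⟩
    · set m := s.max' hs with hmdef
      have hmS : m ∈ s := s.max'_mem hs
      have hma : m < a := ha m hmS
      have hH : H m = y m := hval m hmS
      have hya : y m < y a :=
        hy m (Finset.mem_insert_of_mem hmS) a (Finset.mem_insert_self a s) hma
      set c := (y a - H m) / (a - m) with hcdef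
      have hcpos : 0 < c := div_pos (by rw [hH]; linarith) (by linarith)
      refine ⟨fun x => H (min x m) + c * max (x - m) 0, ?_, ?_, ?_⟩
      · exact (hc.comp (continuous_id.min continuous_const)).add
          (continuous_const.mul ((continuous_id.sub continuous_const).max continuous_const))
      · intro x z hxz
        rcases le_or_gt z m with hzm | hmz
        · have h1 : min x m = x := min_eq_left (le_trans hxz.le hzm)
          have h2 : min z m = z := min_eq_left hzm
          have h3 : max (x - m) 0 = 0 := max_eq_right (by linarith [le_trans hxz.le hzm])
          have h4 : max (z - m) 0 = 0 := max_eq_right (by linarith)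
          simp only [h1, h2, h3, h4]
          have := hm hxz
          linarith
        · have h1 : H (min x m) ≤ H (min z m) :=
            hm.monotone (min_le_min hxz.le le_rfl)
          have h2 : max (x - m) 0 < max (z - m) 0 := by
            rw [max_eq_left (by linarith : (0:ℝ) ≤ z - m)]
            rcases le_or_gt x m with hxm | hxm
            · rw [max_eq_right (by linarith : x - m ≤ 0)]; linarith
            · rw [max_eq_left (by linarith : (0:ℝ) ≤ x - m)]; linarith
          dsimp only
          have := mul_lt_mul_of_pos_left h2 hcpos
          linarith
      · intro v hv
        rcases Finset.mem_insert.mp hv with rfl | hvs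
        · have h1 : min v m = m := min_eq_right hma.le
          have h2 : max (v - m) 0 = v - m := max_eq_left (by linarith)
          have h3 : c * (v - m) = y v - H m :=
            div_mul_cancel₀ _ (by linarith : v - m ≠ 0)
          simp only [h1, h2, h3]; linarith
        · have hvm : v ≤ m := s.le_max' v hvs
          have h1 : min v m = v := min_eq_left hvm
          have h2 : max (v - m) 0 = 0 := max_eq_right (by linarith)
          simp only [h1, h2, mul_zero, add_zero]
          exact hval v hvs

lemma exists_controlCost (S : Finset ℝ) (hS : S.Nonempty)
    (hS1 : ∀ v ∈ S, v ∈ Set.Ioc (0:ℝ) 1) (y : ℝ → ℝ)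
    (hy : ∀ v ∈ S, ∀ w ∈ S, v < w → y v < y w) :
    ∃ c : ControlCost, ∀ v ∈ S, ∀ w ∈ S, y v - y w = c.f' v - c.f' w := by
  obtain ⟨H, hc, hm, hval⟩ := exists_strictMono_interp S y hy
  set δ := S.min' hS with hδdef
  have hδ : δ ∈ Set.Ioc (0:ℝ) 1 := hS1 _ (S.min'_mem hS)
  set B := max (H 1) 0 + 1 with hBdef
  have hB1 : H 1 ≤ B - 1 := by simp [hBdef, le_max_left]
  have hB1' : (0:ℝ) ≤ B - 1 := by simp [hBdef, le_max_right]
  have hB0 : 0 < B := by linarith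
  set F := fun t : ℝ => H t - B * max (1/t) (1/δ) with hFdef
  -- continuity of F on positives
  have hFcont : ∀ x : ℝ, 0 < x → ContinuousAt F x := by
    intro x hx
    exact (hc.continuousAt).sub (continuousAt_const.mul
      ((continuousAt_const.div continuousAt_id hx.ne').max continuousAt_const))
  -- strict monotonicity of F on positives
  have hFmono : ∀ x : ℝ, 0 < x → ∀ z : ℝ, 0 < z → x < z → F x < F z := by
    intro x hx z hz hxz
    have h1 : H x < H z := hm hxz
    have h2 : 1/z ≤ 1/x := one_div_le_one_div_of_le hx hxz.le
    have h3 : max (1/z) (1/δ) ≤ max (1/x) (1/δ) := max_le_max h2 le_rfl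
    have := mul_le_mul_of_nonneg_left h3 hB0.le
    simp only [hFdef]; linarith
  -- key value bounds
  have hmax_ge : ∀ t : ℝ, 0 < t → t ≤ 1 → 1 ≤ max (1/t) (1/δ) := by
    intro t ht ht1
    refine le_max_of_le_left ?_
    rw [le_div_iff₀ ht]; linarith
  have hFneg : ∀ x ∈ Set.Ioc (0:ℝ) 1, F x < 0 := by
    intro x hx
    have h1 : H x ≤ H 1 := hm.monotone hx.2
    have h2 := mul_le_mul_of_nonneg_left (hmax_ge x hx.1 hx.2) hB0.le
    simp only [hFdef]; simp only [mul_one] at h2; linarith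
  have hFtail : ∀ t ∈ Set.Ioc (0:ℝ) δ, 1/t ≤ -F t := by
    intro t ht
    have ht1 : t ≤ 1 := ht.2.trans hδ.2
    have h1 : H t ≤ H 1 := hm.monotone ht1
    have h2 : B * (1/t) ≤ B * max (1/t) (1/δ) :=
      mul_le_mul_of_nonneg_left (le_max_left _ _) hB0.le
    have h3 : 1 ≤ 1/t := by rw [le_div_iff₀ ht.1]; linarith
    have h4 : (B - 1) * 1 ≤ (B - 1) * (1/t) := mul_le_mul_of_nonneg_left h3 hB1'
    simp only [hFdef]
    nlinarith
  -- the cost function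
  set f := fun x : ℝ => ∫ t in (1:ℝ)..x, F t with hfdef
  have hFContOn : ∀ s : Set ℝ, s ⊆ Set.Ioi (0:ℝ) → ContinuousOn F s := by
    intro s hsub t ht
    exact (hFcont t (hsub ht)).continuousWithinAt
  have hFint : ∀ a b : ℝ, 0 < a → 0 < b → IntervalIntegrable F MeasureTheory.volume a b := by
    intro a b ha hb
    refine (hFContOn _ ?_).intervalIntegrable
    intro t ht
    rw [Set.uIcc_eq_union] at ht
    rcases ht with ht | ht
    · exact lt_of_lt_of_le ha ht.1
    · exact lt_of_lt_of_le hb ht.1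
  have hderiv : ∀ x : ℝ, 0 < x → HasDerivAt f (F x) x := by
    intro x hx
    exact intervalIntegral.integral_hasDerivAt_right (hFint 1 x one_pos hx)
      (ContinuousAt.stronglyMeasurableAtFilter isOpen_Ioi
        (fun t ht => hFcont t ht) x hx) (hFcont x hx)
  have hfcont : ContinuousOn f (Set.Ioc (0:ℝ) 1) := fun x hx =>
    ((hderiv x hx.1).continuousAt).continuousWithinAt
  refine ⟨⟨f, F, ?_, ?_, ?_, ?_, ?_, ?_⟩, ?_⟩
  · exact fun x hx => (hderiv x hx.1).hasDerivWithinAt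
  · exact hFContOn _ (fun t ht => ht.1)
  · refine strictAntiOn_of_deriv_neg (convex_Ioc 0 1) hfcont ?_
    intro x hx
    rw [interior_Ioc] at hx
    rw [(hderiv x hx.1).deriv]
    exact hFneg x ⟨hx.1, hx.2.le⟩
  · refine StrictMonoOn.strictConvexOn_of_deriv (convex_Ioc 0 1) hfcont ?_
    rw [interior_Ioc]
    intro x hx z hz hxz
    rw [(hderiv x hx.1).deriv, (hderiv z hz.1).deriv]
    exact hFmono x hx.1 z hz.1 hxz
  · exact intervalIntegral.integral_same
  · -- blowup
    have key : ∀ x ∈ Set.Ioo (0:ℝ) δ, f δ + (Real.log δ - Real.log x) ≤ f x := by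
      intro x hx
      have hxδ : IntervalIntegrable F MeasureTheory.volume x δ := hFint x δ hx.1 hδ.1
      have hsplit : f δ + ∫ t in δ..x, F t = f x :=
        intervalIntegral.integral_add_adjacent_intervals (hFint 1 δ one_pos hδ.1)
          (hFint δ x hδ.1 hx.1)
      have hone : IntervalIntegrable (fun t : ℝ => 1/t) MeasureTheory.volume x δ := by
        refine ContinuousOn.intervalIntegrable ?_
        intro t ht
        rw [Set.uIcc_of_le hx.2.le] at ht
        exact (continuousAt_const.div continuousAt_id
          (lt_of_lt_of_le hx.1 ht.1).ne').continuousWithinAt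
      have h1 : (∫ t in x..δ, 1/t) ≤ ∫ t in x..δ, -F t := by
        refine intervalIntegral.integral_mono_on hx.2.le hone hxδ.neg ?_
        intro t ht
        exact hFtail t ⟨lt_of_lt_of_le hx.1 ht.1, ht.2⟩
      have h2 : (∫ t in x..δ, 1/t) = Real.log δ - Real.log x := by
        rw [integral_one_div_of_pos hx.1 hδ.1,
          Real.log_div hδ.1.ne' hx.1.ne']
      have h3 : (∫ t in x..δ, -F t) = - ∫ t in x..δ, F t := intervalIntegral.integral_neg
      have h4 : (∫ t in δ..x, F t) = - ∫ t in x..δ, F t :=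
        intervalIntegral.integral_symm x δ
      linarith [hsplit]
    have hlog : Tendsto (fun x : ℝ => f δ + (Real.log δ - Real.log x))
        (𝓝[>] (0:ℝ)) atTop := by
      have h2 : Tendsto (fun x : ℝ => -Real.log x) (𝓝[>] (0:ℝ)) atTop :=
        tendsto_neg_atBot_atTop.comp Real.tendsto_log_nhdsGT_zero
      have h3 := tendsto_atTop_add_const_left _ (f δ + Real.log δ) h2
      refine h3.congr fun x => by ring
    refine tendsto_atTop_mono' _ ?_ hlog
    filter_upwards [Ioo_mem_nhdsGT_of_mem (Set.mem_Ico.mpr ⟨le_refl (0:ℝ), hδ.1⟩)]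
      with x hx using key x hx
  · -- f' values
    intro v hv w hw
    have hval' : ∀ z ∈ S, F z = y z - B * (1/δ) := by
      intro z hz
      have h1 : 1/z ≤ 1/δ := one_div_le_one_div_of_le hδ.1 (S.min'_le z hz)
      simp only [hFdef, max_eq_right h1, hval z hz]
    show y v - y w = F v - F w
    rw [hval' v hv, hval' w hw]; ring

/-- an interior payoff monotone profile satisfies the first-order
conditions of a control cost game for some profile of control cost functions. -/
theorem interior_pm_control_cost_foc {N : Type} [Fintype N] [DecidableEq N] {A : N → Type}
    [∀ i, Fintype (A i)] [∀ i, DecidableEq (A i)] [∀ i, Nonempty (A i)]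
    (u : ∀ i : N, (∀ j, A j) → ℝ) (σ : ∀ i, A i → ℝ)
    (hint : Interior σ) (hpm : PayoffMonotone u σ) :
    ∃ f : N → ControlCost, ∀ (i : N) (al ak : A i),
      devUtil u σ i al - devUtil u σ i ak
        = (f i).f' (σ i al) - (f i).f' (σ i ak) := by
  have key : ∀ i : N, ∃ c : ControlCost, ∀ al ak : A i,
      devUtil u σ i al - devUtil u σ i ak = c.f' (σ i al) - c.f' (σ i ak) := by
    intro i
    classical
    set S : Finset ℝ := Finset.image (σ i) Finset.univ with hSdef
    have hS : S.Nonempty := ⟨σ i (Classical.arbitrary (A i)),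
      Finset.mem_image_of_mem _ (Finset.mem_univ _)⟩
    have hle1 : ∀ a : A i, σ i a ≤ 1 := by
      intro a
      have h1 := Finset.single_le_sum (f := σ i) (fun b _ => hpm.1.1 i b) (Finset.mem_univ a)
      rw [hpm.1.2 i] at h1
      exact h1
    have hS1 : ∀ v ∈ S, v ∈ Set.Ioc (0:ℝ) 1 := by
      intro v hv
      obtain ⟨a, -, rfl⟩ := Finset.mem_image.mp hv
      exact ⟨hint i a, hle1 a⟩
    set y : ℝ → ℝ := fun v =>
      if h : ∃ a : A i, σ i a = v then devUtil u σ i h.choose else 0 with hydef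
    have hyval : ∀ a : A i, y (σ i a) = devUtil u σ i a := by
      intro a
      have h : ∃ b : A i, σ i b = σ i a := ⟨a, rfl⟩
      simp only [hydef, dif_pos h]
      have hb : σ i h.choose = σ i a := h.choose_spec
      exact le_antisymm ((hpm.2 i a h.choose).mp hb.le)
        ((hpm.2 i h.choose a).mp hb.ge)
    have hy : ∀ v ∈ S, ∀ w ∈ S, v < w → y v < y w := by
      intro v hv w hw hvw
      obtain ⟨a, -, rfl⟩ := Finset.mem_image.mp hv
      obtain ⟨b, -, rfl⟩ := Finset.mem_image.mp hw
      rw [hyval a, hyval b]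
      exact (lt_iff_lt_of_le_iff_le (hpm.2 i a b)).mp hvw
    obtain ⟨c, hc⟩ := exists_controlCost S hS hS1 y hy
    refine ⟨c, fun al ak => ?_⟩
    have h1 := hc (σ i al) (Finset.mem_image_of_mem _ (Finset.mem_univ al))
      (σ i ak) (Finset.mem_image_of_mem _ (Finset.mem_univ ak))
    rw [hyval al, hyval ak] at h1
    exact h1
  choose g hg using key
  exact ⟨g, hg⟩
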